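/- Let g ≥ 1 be an integer, let z₁,…,z_{g+2} ∈ ℂ be pairwise distinct, let λ₁,…,λ_g ∈ ℂ be pairwise distinct with λ_j ≠ z_k for all j, k, and let μ₁,…,μ_g, γ₁,…,γ_{g+2}, r₁,…,r_{g+2}, H₁,…,H_{g+2} ∈ ℂ. Define Q₀(z) = ∑_{k=1}^{g+2} ( r_k²/(z−z_k)² + H_k/(z−z_k) ), Q₁(z) = ∑_{j=1}^{g} μ_j/(z−λ_j) + ∑_{k=1}^{g+2} γ_k/(z−z_k), and Q₂(z) = (1/4)·(∑_{j} 1/(z−λ_j) − ∑_{k} 1/(z−z_k))² + (1/2)·(∑_{j} 1/(z−λ_j)² − ∑_{k} 1/(z−z_k)²). Fix ℓ ∈ {1,…,g} with μ_ℓ ≠ 0 and Q₀(λ_ℓ) = μ_ℓ², and let m be a holomorphic function on an open neighborhood V of λ_ℓ (with V disjoint from {z₁,…,z_{g+2}} and from {λ_i : i ≠ ℓ}) such that m(z)² = Q₀(z) on V and m(λ_ℓ) = μ_ℓ. Define W(z) = ( Q₂(z) − Q₁(z)²/(4·Q₀(z)) ) / (2·m(z)) for z ∈ V with z ≠ λ_ℓ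 and Q₀(z) ≠ 0. Then (z−λ_ℓ)·( W(z) − 1/(4·μ_ℓ·(z−λ_ℓ)²) ) tends to 0 as z → λ_ℓ if and only if the Bethe equation at index ℓ holds: ∑_{k=1}^{g+2} γ_k/(λ_ℓ−z_k) = ∑_{i≠ℓ} (μ_ℓ−μ_i)/(λ_ℓ−λ_i) − μ_ℓ·∑_{k=1}^{g+2} 1/(λ_ℓ−z_k). -/

import Mathlib

open Filter Topology

lemma key_alg (u a q w s t b : ℂ) (hu : u ≠ 0) (ha : a ≠ 0) (hq : q ≠ 0) (hw : w ≠ 0) :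
    u * ((((1/4)*(1/u + s)^2 + (1/2)*(1/u^2 + t)) - (a/u + b)^2/(4*q))/(2*w) - 1/(4*a*u^2))
      = ((2*a*((1/4)*(1+u*s)^2 + (1/2)*(1+u^2*t) - (a+u*b)^2/(4*q)) - w) / u) * (4*a*w)⁻¹ := by
  have e1 : 1/u + s = (1+u*s)/u := by field_simp
  have e2 : 1/u^2 + t = (1+u^2*t)/u^2 := by field_simp
  have e3 : a/u + b = (a+u*b)/u := by field_simp
  rw [e1, e2, e3, div_pow, div_pow]
  generalize (1+u*s)^2 = X
  generalize (1+u^2*t) = Y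
  generalize (a+u*b)^2 = Z
  have hM : (1/4)*(X/u^2) + (1/2)*(Y/u^2) - (Z/u^2)/(4*q)
      = ((1/4)*X + (1/2)*Y - Z/(4*q))/u^2 := by ring
  rw [hM]
  generalize (1/4)*X + (1/2)*Y - Z/(4*q) = M
  field_simp
  ring

lemma main_aux (lam a : ℂ) (ha : a ≠ 0) (Q₀ m sf tf bf E : ℂ → ℂ)
    (hQ₀lam : Q₀ lam = a ^ 2) (hmlam : m lam = a)
    (hsf : DifferentiableAt ℂ sf lam) (htf : DifferentiableAt ℂ tf lam)
    (hbf : DifferentiableAt ℂ bf lam) (hmd : DifferentiableAt ℂ m lam)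
    (hQ₀m : ∀ᶠ z in 𝓝 lam, Q₀ z = m z * m z)
    (hE : ∀ z, z ≠ lam → Q₀ z ≠ 0 → m z ≠ 0 →
      E z = (z - lam) * ((((1/4)*(1/(z-lam) + sf z)^2 + (1/2)*(1/(z-lam)^2 + tf z))
            - (a/(z-lam) + bf z)^2/(4*Q₀ z))/(2*m z) - 1/(4*a*(z-lam)^2))) :
    Tendsto E (𝓝[≠] lam) (𝓝 0) ↔ a * sf lam = bf lam := by
  have hm' : HasDerivAt m (deriv m lam) lam := hmd.hasDerivAt
  have hs' : HasDerivAt sf (deriv sf lam) lam := hsf.hasDerivAt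
  have ht' : HasDerivAt tf (deriv tf lam) lam := htf.hasDerivAt
  have hb' : HasDerivAt bf (deriv bf lam) lam := hbf.hasDerivAt
  have hQd : HasDerivAt Q₀ (deriv m lam * m lam + m lam * deriv m lam) lam :=
    (hm'.mul hm').congr_of_eventuallyEq hQ₀m
  have hu : HasDerivAt (fun z : ℂ => z - lam) 1 lam := (hasDerivAt_id lam).sub_const lam
  have hden0 : (4:ℂ) * Q₀ lam ≠ 0 := by
    rw [hQ₀lam]; intro h
    exact (pow_ne_zero 2 ha) (by linear_combination h/4)
  -- N and its derivative
  set N : ℂ → ℂ := fun z => 2*a*((1/4)*(1+(z-lam)*sf z)^2 + (1/2)*(1+(z-lam)^2*tf z)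
      - (a+(z-lam)*bf z)^2/(4*Q₀ z)) - m z with hNdef
  have hNbig := (((((hu.mul hs').const_add 1).pow 2).const_mul ((1:ℂ)/4)).add
      (((((hu.pow 2).mul ht').const_add 1)).const_mul ((1:ℂ)/2)) |>.sub
      ((((hu.mul hb').const_add a).pow 2).div (hQd.const_mul 4) hden0)).const_mul (2*a) |>.sub hm'
  have hN : HasDerivAt N (a * sf lam - bf lam) lam := by
    refine hNbig.congr_deriv ?_
    rw [hQ₀lam, hmlam]
    simp only [Pi.mul_apply, Pi.pow_apply, sub_self, zero_mul, mul_zero, add_zero, zero_add, mul_one, one_mul, pow_one]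
    field_simp
    ring
  have hN0 : N lam = 0 := by
    simp only [hNdef, sub_self, zero_mul, mul_zero, add_zero, zero_add, mul_one, one_mul,
      hQ₀lam, hmlam]
    field_simp
    ring
  -- limits
  have hm_ne : ∀ᶠ z in 𝓝 lam, m z ≠ 0 := hmd.continuousAt.eventually_ne (by rw [hmlam]; exact ha)
  have hQQ : (fun z => m z * m z) =ᶠ[𝓝 lam] Q₀ := by
    filter_upwards [hQ₀m] with z h; exact h.symm
  have hQcont : ContinuousAt Q₀ lam :=
    (hmd.continuousAt.mul hmd.continuousAt).congr hQQ
  have hQ_ne : ∀ᶠ z in 𝓝 lam, Q₀ z ≠ 0 :=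
    hQcont.eventually_ne (by rw [hQ₀lam]; exact pow_ne_zero 2 ha)
  have hEeq : (fun z => (N z / (z - lam)) * (4*a*m z)⁻¹) =ᶠ[𝓝[≠] lam] E := by
    filter_upwards [((hm_ne.and hQ_ne).filter_mono nhdsWithin_le_nhds), self_mem_nhdsWithin]
      with z hz hzlam
    have hzl : z ≠ lam := hzlam
    rw [hE z hzl hz.2 hz.1, key_alg (z - lam) a (Q₀ z) (m z) (sf z) (tf z) (bf z)
      (sub_ne_zero.mpr hzl) ha hz.2 hz.1]
  have hT : Tendsto (fun z => N z / (z - lam)) (𝓝[≠] lam) (𝓝 (a * sf lam - bf lam)) := by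
    have := hasDerivAt_iff_tendsto_slope.mp hN
    refine this.congr (fun z => ?_)
    rw [slope_def_field, hN0, sub_zero]
  have hInv : Tendsto (fun z => (4*a*m z)⁻¹) (𝓝[≠] lam) (𝓝 ((4*a*a)⁻¹)) := by
    have h4 : (4:ℂ)*a*(m lam) ≠ 0 := by
      rw [hmlam]; simp [ha]
    have := ((continuousAt_const.mul hmd.continuousAt).inv₀ h4).tendsto
    replace this : Tendsto (fun z => (4*a*m z)⁻¹) (𝓝 lam) (𝓝 ((4*a*m lam)⁻¹)) := this
    rw [hmlam] at this
    exact this.mono_left nhdsWithin_le_nhds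
  have hTend : Tendsto E (𝓝[≠] lam) (𝓝 ((a * sf lam - bf lam) * (4*a*a)⁻¹)) :=
    Tendsto.congr' hEeq (hT.mul hInv)
  have h4aa : ((4:ℂ)*a*a)⁻¹ ≠ 0 := by
    apply inv_ne_zero; simp [ha]
  constructor
  · intro h
    have h0 := tendsto_nhds_unique h hTend
    have := (mul_eq_zero.mp h0.symm).resolve_right h4aa
    linear_combination this
  · intro h
    have : (a * sf lam - bf lam) * (4*a*a)⁻¹ = 0 := by rw [h, sub_self, zero_mul]
    rw [this] at hTend
    exact hTend

/-- The residue of the subleading WKB differential `v₁` at the point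
`λ_ℓ^{(1)} = (λ_ℓ, μ_ℓ)` of the WKB curve vanishes if and only if the Bethe
equation at index `ℓ` holds.  Here `W = (Q₂ − Q₁²/(4Q₀))/(2m)` is the singular
part of `v₁/dz` at `λ_ℓ`, with `m` a holomorphic branch of `√Q₀` with
`m(λ_ℓ) = μ_ℓ`, and the vanishing of the residue is expressed as
`(z−λ_ℓ)·(W(z) − 1/(4μ_ℓ(z−λ_ℓ)²)) → 0` as `z → λ_ℓ`. -/
theorem residue_v1_vanishes_iff_bethe
    (g : ℕ) (hg : 1 ≤ g) (p : Fin (g + 2) → ℂ) (l : Fin g → ℂ)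
    (hp : Function.Injective p) (hl : Function.Injective l)
    (hlp : ∀ j k, l j ≠ p k)
    (μ : Fin g → ℂ) (γ r H : Fin (g + 2) → ℂ)
    (Q₀ Q₁ Q₂ : ℂ → ℂ)
    (hQ₀ : ∀ z, Q₀ z = ∑ k, ((r k) ^ 2 / (z - p k) ^ 2 + H k / (z - p k)))
    (hQ₁ : ∀ z, Q₁ z = (∑ j, μ j / (z - l j)) + ∑ k, γ k / (z - p k))
    (hQ₂ : ∀ z, Q₂ z = (1 / 4) * ((∑ j, 1 / (z - l j)) - ∑ k, 1 / (z - p k)) ^ 2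
        + (1 / 2) * ((∑ j, 1 / (z - l j) ^ 2) - ∑ k, 1 / (z - p k) ^ 2))
    (ℓ : Fin g) (hμℓ : μ ℓ ≠ 0) (hQ₀ℓ : Q₀ (l ℓ) = (μ ℓ) ^ 2)
    (V : Set ℂ) (hV : IsOpen V) (hℓV : l ℓ ∈ V)
    (hVp : ∀ k, p k ∉ V) (hVl : ∀ i, i ≠ ℓ → l i ∉ V)
    (m : ℂ → ℂ) (hm : DifferentiableOn ℂ m V)
    (hm2 : ∀ z ∈ V, (m z) ^ 2 = Q₀ z) (hmℓ : m (l ℓ) = μ ℓ) :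
    Tendsto
      (fun z => (z - l ℓ) *
        ((Q₂ z - (Q₁ z) ^ 2 / (4 * Q₀ z)) / (2 * m z)
          - 1 / (4 * μ ℓ * (z - l ℓ) ^ 2)))
      (𝓝[≠] (l ℓ)) (𝓝 0) ↔
    ∑ k, γ k / (l ℓ - p k)
      = (∑ i ∈ Finset.univ.erase ℓ, (μ ℓ - μ i) / (l ℓ - l i))
        - μ ℓ * ∑ k, 1 / (l ℓ - p k) := by
  have hla : ∀ i : Fin g, i ≠ ℓ → l ℓ - l i ≠ 0 :=
    fun i hi => sub_ne_zero.mpr (fun h => hi (hl h).symm)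
  have hpa : ∀ k, l ℓ - p k ≠ 0 := fun k => sub_ne_zero.mpr (hlp ℓ k)
  set sf : ℂ → ℂ :=
    fun z => (∑ i ∈ Finset.univ.erase ℓ, 1/(z - l i)) - ∑ k, 1/(z - p k) with hsfdef
  set tf : ℂ → ℂ :=
    fun z => (∑ i ∈ Finset.univ.erase ℓ, 1/(z - l i)^2) - ∑ k, 1/(z - p k)^2 with htfdef
  set bf : ℂ → ℂ :=
    fun z => (∑ i ∈ Finset.univ.erase ℓ, μ i/(z - l i)) + ∑ k, γ k/(z - p k) with hbfdef
  have hsf : DifferentiableAt ℂ sf (l ℓ) := by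
    refine DifferentiableAt.sub (DifferentiableAt.fun_sum fun i hi => ?_)
      (DifferentiableAt.fun_sum fun k _ => ?_)
    · exact (differentiableAt_const _).div (differentiableAt_fun_id.sub (differentiableAt_const _))
        (hla i (Finset.ne_of_mem_erase hi))
    · exact (differentiableAt_const _).div (differentiableAt_fun_id.sub (differentiableAt_const _))
        (hpa k)
  have htf : DifferentiableAt ℂ tf (l ℓ) := by
    refine DifferentiableAt.sub (DifferentiableAt.fun_sum fun i hi => ?_)
      (DifferentiableAt.fun_sum fun k _ => ?_)
    · exact (differentiableAt_const _).div
        ((differentiableAt_fun_id.sub (differentiableAt_const _)).pow 2)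
        (pow_ne_zero 2 (hla i (Finset.ne_of_mem_erase hi)))
    · exact (differentiableAt_const _).div
        ((differentiableAt_fun_id.sub (differentiableAt_const _)).pow 2)
        (pow_ne_zero 2 (hpa k))
  have hbf : DifferentiableAt ℂ bf (l ℓ) := by
    refine DifferentiableAt.add (DifferentiableAt.fun_sum fun i hi => ?_)
      (DifferentiableAt.fun_sum fun k _ => ?_)
    · exact (differentiableAt_const _).div (differentiableAt_fun_id.sub (differentiableAt_const _))
        (hla i (Finset.ne_of_mem_erase hi))
    · exact (differentiableAt_const _).div (differentiableAt_fun_id.sub (differentiableAt_const _))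
        (hpa k)
  have hmd : DifferentiableAt ℂ m (l ℓ) := hm.differentiableAt (hV.mem_nhds hℓV)
  have hQ₀m : ∀ᶠ z in 𝓝 (l ℓ), Q₀ z = m z * m z := by
    filter_upwards [hV.mem_nhds hℓV] with z hz
    rw [← hm2 z hz]; ring
  refine (main_aux (l ℓ) (μ ℓ) hμℓ Q₀ m sf tf bf _ hQ₀ℓ hmℓ hsf htf hbf hmd hQ₀m ?_).trans ?_
  · intro z hz hQz hmz
    simp only [hsfdef, htfdef, hbfdef]
    rw [hQ₂ z, hQ₁ z,
      ← Finset.add_sum_erase _ (fun j => 1/(z - l j)) (Finset.mem_univ ℓ),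
      ← Finset.add_sum_erase _ (fun j => 1/(z - l j)^2) (Finset.mem_univ ℓ),
      ← Finset.add_sum_erase _ (fun j => μ j/(z - l j)) (Finset.mem_univ ℓ)]
    ring
  · simp only [hsfdef, hbfdef]
    have hsplit : ∑ i ∈ Finset.univ.erase ℓ, (μ ℓ - μ i)/(l ℓ - l i)
        = μ ℓ * (∑ i ∈ Finset.univ.erase ℓ, 1/(l ℓ - l i))
          - ∑ i ∈ Finset.univ.erase ℓ, μ i/(l ℓ - l i) := by
      rw [Finset.mul_sum, ← Finset.sum_sub_distrib]
      exact Finset.sum_congr rfl fun i _ => by rw [sub_div, mul_one_div]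
    rw [hsplit]
    constructor <;> intro h <;> linear_combination -h
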